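/- Let n, r, s be integers with n ≥ 2r+1, r ≥ 0, s ≥ 1. Then the polynomial Λ_{n,r,s} has exactly one real root g ≥ 1; moreover Λ_{n,r,s}(τ) < 0 for all real τ with 1 ≤ τ < g, and Λ_{n,r,s}(τ) > 0 for all real τ > g. -/

import Mathlib

/-- `Λ_{n,r,s}(τ) = (1/n!)·(τ^n − s·Σ_{j=0}^r C(n,j)·(τ−1)^j)`. -/
noncomputable def Lam (n r s : ℕ) (τ : ℝ) : ℝ :=
  (1 / (Nat.factorial n : ℝ)) *
    (τ ^ n - (s : ℝ) * ∑ j ∈ Finset.range (r + 1), (Nat.choose n j : ℝ) * (τ - 1) ^ j)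

/-- The denominator polynomial `P(τ) = Σ_{j=0}^r C(n,j)(τ-1)^j`. -/
noncomputable def Pf (n r : ℕ) (τ : ℝ) : ℝ :=
  ∑ j ∈ Finset.range (r + 1), (Nat.choose n j : ℝ) * (τ - 1) ^ j

/-- Its derivative. -/
noncomputable def Pd (n r : ℕ) (τ : ℝ) : ℝ :=
  ∑ j ∈ Finset.range (r + 1), (Nat.choose n j : ℝ) * ((j : ℝ) * (τ - 1) ^ (j - 1) * 1)

lemma Pf_pos (n r : ℕ) (τ : ℝ) (hτ : 1 ≤ τ) : 0 < Pf n r τ := by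
  unfold Pf
  apply Finset.sum_pos'
  · intro j hj
    have h1 : (0:ℝ) ≤ τ - 1 := by linarith
    exact mul_nonneg (by positivity) (pow_nonneg h1 j)
  · exact ⟨0, Finset.mem_range.mpr (Nat.succ_pos r), by simp⟩

lemma Pf_one (n r : ℕ) : Pf n r 1 = 1 := by
  unfold Pf
  rw [Finset.sum_eq_single 0]
  · simp
  · intro j hj hj0
    simp [zero_pow hj0]
  · simp

lemma key_id (n : ℕ) : ∀ r : ℕ, r ≤ n → ∀ t : ℝ,
    (n : ℝ) * (∑ j ∈ Finset.range (r + 1), (Nat.choose n j : ℝ) * t ^ j)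
      - (1 + t) * (∑ j ∈ Finset.range (r + 1), (Nat.choose n j : ℝ) * ((j : ℝ) * t ^ (j - 1) * 1))
      = ((n : ℝ) - (r : ℝ)) * (Nat.choose n r : ℝ) * t ^ r := by
  intro r
  induction r with
  | zero => intro _ t; simp
  | succ r ih =>
    intro hrn t
    have hr : r ≤ n := by omega
    have hcast : ((r : ℝ) + 1) * (Nat.choose n (r + 1) : ℝ)
        = ((n : ℝ) - (r : ℝ)) * (Nat.choose n r : ℝ) := by
      have h2 := congrArg (Nat.cast : ℕ → ℝ) (Nat.choose_succ_right_eq n r)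
      push_cast [Nat.cast_sub hr] at h2
      linarith
    have ih' := ih hr t
    simp only [Finset.sum_range_succ, Nat.add_sub_cancel] at ih' ⊢
    push_cast at ih' ⊢
    linear_combination ih' - t ^ r * hcast

lemma Pf_hasDeriv (n r : ℕ) (τ : ℝ) : HasDerivAt (Pf n r) (Pd n r τ) τ := by
  unfold Pf Pd
  apply HasDerivAt.fun_sum
  intro j hj
  exact (((hasDerivAt_id τ).sub_const 1).pow j).const_mul _

lemma Pf_continuous (n r : ℕ) : Continuous (Pf n r) := by
  unfold Pf
  exact continuous_finset_sum _ fun j _ => by fun_prop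

lemma h_strictMono (n r : ℕ) (hn : 2 * r + 1 ≤ n) :
    StrictMonoOn (fun τ : ℝ => τ ^ n / Pf n r τ) (Set.Ici 1) := by
  have hrn : r ≤ n := by omega
  apply strictMonoOn_of_deriv_pos (convex_Ici 1)
  · exact ContinuousOn.div (by fun_prop) (Pf_continuous n r).continuousOn
      fun x hx => (Pf_pos n r x hx).ne'
  · intro x hx
    rw [interior_Ici] at hx
    have hx1 : (1:ℝ) < x := hx
    have hx0 : (0:ℝ) < x := by linarith
    have hP := Pf_pos n r x hx1.le
    have hd : HasDerivAt (fun τ : ℝ => τ ^ n / Pf n r τ)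
        (((n : ℝ) * x ^ (n - 1) * Pf n r x - x ^ n * Pd n r x) / Pf n r x ^ 2) x :=
      (hasDerivAt_pow n x).div (Pf_hasDeriv n r x) hP.ne'
    rw [hd.deriv]
    apply div_pos _ (by positivity)
    have hkey := key_id n r hrn (x - 1)
    have hx' : (1:ℝ) + (x - 1) = x := by ring
    rw [hx'] at hkey
    have h2 : (n : ℝ) * Pf n r x - x * Pd n r x
        = ((n : ℝ) - (r : ℝ)) * (Nat.choose n r : ℝ) * (x - 1) ^ r := hkey
    have hxpow : x ^ n = x ^ (n - 1) * x := by
      rw [← pow_succ]; congr 1; omega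
    have hrltn : (r : ℝ) < (n : ℝ) := by exact_mod_cast (by omega : r < n)
    have hchoose : (0:ℝ) < (Nat.choose n r : ℝ) := by exact_mod_cast Nat.choose_pos hrn
    have hpos : (0:ℝ) < ((n : ℝ) - (r : ℝ)) * (Nat.choose n r : ℝ) * (x - 1) ^ r := by
      apply mul_pos (mul_pos (by linarith) hchoose)
      exact pow_pos (by linarith) r
    have h3 : (n : ℝ) * x ^ (n - 1) * Pf n r x - x ^ n * Pd n r x
        = x ^ (n - 1) * (((n : ℝ) - (r : ℝ)) * (Nat.choose n r : ℝ) * (x - 1) ^ r) := by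
      rw [hxpow]; linear_combination x ^ (n - 1) * h2
    rw [h3]
    exact mul_pos (pow_pos hx0 _) hpos

lemma sign_helper (c x : ℝ) (hc : 0 < c) :
    (c * x < 0 ↔ x < 0) ∧ (c * x = 0 ↔ x = 0) ∧ (0 < c * x ↔ 0 < x) := by
  refine ⟨⟨fun h => ?_, fun h => mul_neg_of_pos_of_neg hc h⟩,
    ⟨fun h => ?_, fun h => by rw [h, mul_zero]⟩,
    ⟨fun h => ?_, fun h => mul_pos hc h⟩⟩
  · by_contra hge; push_neg at hge; nlinarith [mul_nonneg hc.le hge]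
  · rcases mul_eq_zero.mp h with h1 | h1
    · exact absurd h1 hc.ne'
    · exact h1
  · by_contra hge; push_neg at hge
    nlinarith [mul_nonneg hc.le (neg_nonneg.mpr hge)]

/-- For integers `n ≥ 2r+1`, `r ≥ 0`, `s ≥ 1`, the polynomial `Λ_{n,r,s}` has
exactly one real root `g ≥ 1`; moreover `Λ_{n,r,s}(τ) < 0` for `1 ≤ τ < g` and
`Λ_{n,r,s}(τ) > 0` for `τ > g`. -/
theorem stmt_6 (n r s : ℕ) (hn : 2 * r + 1 ≤ n) (hs : 1 ≤ s) :
    (∃! g : ℝ, 1 ≤ g ∧ Lam n r s g = 0) ∧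
    ∀ g : ℝ, 1 ≤ g → Lam n r s g = 0 →
      (∀ τ : ℝ, 1 ≤ τ → τ < g → Lam n r s τ < 0) ∧
      (∀ τ : ℝ, g < τ → 0 < Lam n r s τ) := by
  have hrn : r ≤ n := by omega
  have hmono := h_strictMono n r hn
  set h : ℝ → ℝ := fun τ => τ ^ n / Pf n r τ with hh
  have hfac : (0:ℝ) < 1 / (Nat.factorial n : ℝ) := by positivity
  have hLam : ∀ τ : ℝ, 1 ≤ τ →
      Lam n r s τ = (1 / (Nat.factorial n : ℝ) * Pf n r τ) * (h τ - s) := by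
    intro τ hτ
    have hP := (Pf_pos n r τ hτ).ne'
    show Lam n r s τ = _
    unfold Lam
    rw [show (1 / (Nat.factorial n : ℝ) * Pf n r τ) * (h τ - s)
        = 1 / (Nat.factorial n : ℝ) * (τ ^ n - (s:ℝ) * Pf n r τ) from by
      simp only [hh]; field_simp]
    rfl
  have hsign : ∀ τ : ℝ, 1 ≤ τ →
      (Lam n r s τ < 0 ↔ h τ < s) ∧ (Lam n r s τ = 0 ↔ h τ = s) ∧
      (0 < Lam n r s τ ↔ (s:ℝ) < h τ) := by
    intro τ hτ
    have hP := Pf_pos n r τ hτ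
    have hc : (0:ℝ) < 1 / (Nat.factorial n : ℝ) * Pf n r τ := mul_pos hfac hP
    obtain ⟨e1, e2, e3⟩ := sign_helper _ (h τ - s) hc
    rw [hLam τ hτ]
    exact ⟨by rw [e1, sub_neg], by rw [e2, sub_eq_zero], by rw [e3, sub_pos]⟩
  -- existence of a root via IVT
  have h1val : h 1 = 1 := by simp [hh, Pf_one]
  set K : ℝ := ∑ j ∈ Finset.range (r + 1), (Nat.choose n j : ℝ) with hK
  have hK1 : (1:ℝ) ≤ K := by
    rw [hK]
    calc (1:ℝ) = (Nat.choose n 0 : ℝ) := by simp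
    _ ≤ _ := Finset.single_le_sum (f := fun j => (Nat.choose n j : ℝ))
        (fun j _ => by positivity) (Finset.mem_range.mpr (Nat.succ_pos r))
  set M : ℝ := max 2 ((s:ℝ) * K) with hM
  have hM2 : (2:ℝ) ≤ M := le_max_left _ _
  have hM1 : (1:ℝ) ≤ M := by linarith
  have hsK : (s:ℝ) * K ≤ M := le_max_right _ _
  have hPfM : Pf n r M ≤ K * M ^ r := by
    unfold Pf
    rw [hK, Finset.sum_mul]
    apply Finset.sum_le_sum
    intro j hj
    have hj' : j ≤ r := by
      have := Finset.mem_range.mp hj; omega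
    have hb : (M - 1) ^ j ≤ M ^ r := by
      calc (M - 1) ^ j ≤ M ^ j := pow_le_pow_left₀ (by linarith) (by linarith) j
      _ ≤ M ^ r := pow_le_pow_right₀ hM1 hj'
    exact mul_le_mul_of_nonneg_left hb (by positivity)
  have hPM := Pf_pos n r M hM1
  have hsM : (s:ℝ) ≤ h M := by
    rw [hh]
    rw [le_div_iff₀ hPM]
    calc (s:ℝ) * Pf n r M ≤ (s:ℝ) * (K * M ^ r) :=
          mul_le_mul_of_nonneg_left hPfM (by positivity)
    _ = ((s:ℝ) * K) * M ^ r := by ring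
    _ ≤ M * M ^ r := mul_le_mul_of_nonneg_right hsK (by positivity)
    _ = M ^ (r + 1) := by rw [pow_succ]; ring
    _ ≤ M ^ n := pow_le_pow_right₀ hM1 (by omega)
  have hcont : ContinuousOn h (Set.Icc 1 M) :=
    ContinuousOn.div (by fun_prop) (Pf_continuous n r).continuousOn
      fun x hx => (Pf_pos n r x hx.1).ne'
  have hmem : (s:ℝ) ∈ Set.Icc (h 1) (h M) := by
    rw [h1val]
    exact ⟨by exact_mod_cast hs, hsM⟩
  obtain ⟨g, hgmem, hgval⟩ := intermediate_value_Icc hM1 hcont hmem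
  have hg1 : (1:ℝ) ≤ g := hgmem.1
  have hLg : Lam n r s g = 0 := (hsign g hg1).2.1.mpr hgval
  constructor
  · refine ⟨g, ⟨hg1, hLg⟩, ?_⟩
    rintro y ⟨hy1, hy0⟩
    apply hmono.injOn (Set.mem_Ici.mpr hy1) (Set.mem_Ici.mpr hg1)
    rw [(hsign y hy1).2.1.mp hy0, hgval]
  · intro g' hg'1 hg'0
    have hg'val : h g' = s := (hsign g' hg'1).2.1.mp hg'0
    constructor
    · intro τ hτ1 hτlt
      apply (hsign τ hτ1).1.mpr
      rw [← hg'val]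
      exact hmono (Set.mem_Ici.mpr hτ1) (Set.mem_Ici.mpr hg'1) hτlt
    · intro τ hτgt
      have hτ1 : (1:ℝ) ≤ τ := le_trans hg'1 hτgt.le
      apply (hsign τ hτ1).2.2.mpr
      rw [← hg'val]
      exact hmono (Set.mem_Ici.mpr hg'1) (Set.mem_Ici.mpr hτ1) hτgt
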